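/- Let p : E ⥤ B be a functor which is an isofibration. If p admits a left adjoint L : B ⥤ E together with an adjunction L ⊣ p whose unit 𝟭_B ⟶ L ⋙ p is a natural isomorphism, then p admits a left adjoint L' : B ⥤ E with L' ⋙ p = 𝟭_B and an adjunction L' ⊣ p whose unit is the identity natural transformation. -/
import Mathlib


open CategoryTheory

universe v₁ v₂ u₁ u₂

/-- A functor is an isofibration if every isomorphism whose domain is in the image
can be lifted. -/
def Isofibration {A : Type u₁} [Category.{v₁} A] {B : Type u₂} [Category.{v₂} B]
    (F : A ⥤ B) : Prop :=
  ∀ (a : A) (b : B) (β : F.obj a ≅ b),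
    ∃ (a' : A) (α : a ≅ a') (h : F.obj a' = b), F.mapIso α ≪≫ eqToIso h = β

/-- An isofibration admitting a left adjoint with invertible unit admits a left adjoint
which is a strict section, with identity unit. -/
theorem isofibration_left_adjoint_normalization
    {E : Type u₁} [Category.{v₁} E] {B : Type u₂} [Category.{v₂} B]
    (p : E ⥤ B) (hp : Isofibration p)
    (L : B ⥤ E) (adj : L ⊣ p) (hunit : IsIso adj.unit) :
    ∃ (L' : B ⥤ E) (adj' : L' ⊣ p) (h : L' ⋙ p = 𝟭 B),
      adj'.unit = eqToHom h.symm := by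
  choose obj α hob hcomp using fun b => hp (L.obj b) b ((asIso (adj.unit.app b)).symm)
  -- key equation: p.map (α b).hom ≫ eqToHom (hob b) = inv (adj.unit.app b)
  have key : ∀ b, p.map (α b).hom ≫ eqToHom (hob b) = inv (adj.unit.app b) := by
    intro b
    have := congrArg Iso.hom (hcomp b)
    simpa using this
  have keyinv : ∀ b, p.map (α b).inv = eqToHom (hob b) ≫ adj.unit.app b := by
    intro b
    have h1 : p.map (α b).hom = inv (adj.unit.app b) ≫ eqToHom (hob b).symm := by
      rw [← key b]; simp
    have h2 : p.map (α b).inv = inv (p.map (α b).hom) :=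
      IsIso.eq_inv_of_hom_inv_id (by rw [← p.map_comp]; simp)
    rw [h2]
    simp [h1]
  let L' : B ⥤ E :=
    { obj := obj
      map := fun {b b'} f => (α b).inv ≫ L.map f ≫ (α b').hom
      map_id := by intro b; simp
      map_comp := by intros; simp }
  let e : L ≅ L' := NatIso.ofComponents α (by intros; simp [L'])
  refine ⟨L', adj.ofNatIsoLeft e, ?_, ?_⟩
  · refine CategoryTheory.Functor.ext ?_ ?_
    · exact hob
    · intro b b' f
      have hnat : p.map (L.map f) = inv (adj.unit.app b) ≫ f ≫ adj.unit.app b' := by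
        rw [IsIso.eq_inv_comp]
        exact (adj.unit.naturality f).symm
      have : p.map (α b').hom = inv (adj.unit.app b') ≫ eqToHom (hob b').symm := by
        rw [← key b']; simp
      simp [L', hnat, keyinv b, this]
  · ext b
    have : (adj.ofNatIsoLeft e).unit.app b
        = adj.unit.app b ≫ p.map ((α b).hom) := by
      simp [Adjunction.ofNatIsoLeft, Adjunction.mkOfHomEquiv_unit_app,
        Adjunction.homEquiv_unit, Adjunction.equivHomsetLeftOfNatIso, e]
    rw [this]
    have hmap : p.map (α b).hom = inv (adj.unit.app b) ≫ eqToHom (hob b).symm := by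
      rw [← key b]; simp
    rw [hmap, IsIso.hom_inv_id_assoc, eqToHom_app]
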